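/- Let F be a real generating cone in a vector space V, let n be a norm on V, and let ñ(x) = inf { n(u) + n(v) : u, v ∈ F, x = u − v }. If F has nonempty interior with respect to the topology of n, then the norms n and ñ are equivalent on V: n(x) ≤ ñ(x) for all x, and there exists K > 0 such that ñ(x) ≤ K n(x) for all x ∈ V. Explicitly, if the n-ball B_δ(s) ⊆ F, one may take K = 2n(s)/δ + 1. -/
import Mathlib


/-- The extension `ñ(x) = inf { n(u) + n(v) : u, v ∈ F, x = u - v }` of a norm `n`
along a generating cone `F`. -/
noncomputable def extNorm {V : Type*} [AddCommGroup V] (n : V → ℝ) (F : Set V) (x : V) : ℝ :=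
  sInf {r : ℝ | ∃ u ∈ F, ∃ v ∈ F, x = u - v ∧ r = n u + n v}

/-- If the generating cone `F` has nonempty interior for the norm `n`
(witnessed by a ball `B_δ(s) ⊆ F`), then `n` and `ñ` are equivalent norms:
`n ≤ ñ` and `ñ(x) ≤ (2 n(s)/δ + 1) n(x)` for all `x`. -/
theorem extNorm_equiv {V : Type*} [AddCommGroup V] [Module ℝ V] (n : V → ℝ) (F : Set V)
    (hn_def : ∀ x, n x = 0 → x = 0) (hn_nonneg : ∀ x, 0 ≤ n x)
    (hn_hom : ∀ (a : ℝ) (x : V), n (a • x) = |a| * n x)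
    (hn_tri : ∀ x y : V, n (x + y) ≤ n x + n y)
    (hF_add : ∀ u ∈ F, ∀ v ∈ F, u + v ∈ F)
    (hF_smul : ∀ a : ℝ, 0 ≤ a → ∀ u ∈ F, a • u ∈ F)
    (hgen : ∀ x : V, ∃ u ∈ F, ∃ v ∈ F, x = u - v)
    (s : V) (δ : ℝ) (hδ : 0 < δ) (hball : ∀ v : V, n (s - v) < δ → v ∈ F) :
    (∀ x : V, n x ≤ extNorm n F x) ∧
    (∀ x : V, extNorm n F x ≤ (2 * n s / δ + 1) * n x) := by
  have hn0 : n 0 = 0 := by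
    have := hn_hom 0 (0 : V)
    simpa using this
  have hlb : ∀ x : V, ∀ r ∈ {r : ℝ | ∃ u ∈ F, ∃ v ∈ F, x = u - v ∧ r = n u + n v}, n x ≤ r := by
    rintro x r ⟨u, hu, v, hv, hx, hr⟩
    have h1 : n (u - v) ≤ n u + n v := by
      have := hn_tri u (-v)
      have h2 : n (-v) = n v := by
        have := hn_hom (-1) v
        simpa using this
      calc n (u - v) = n (u + -v) := by rw [sub_eq_add_neg]
        _ ≤ n u + n (-v) := hn_tri u (-v)
        _ = n u + n v := by rw [h2]
    rw [hx, hr]; exact h1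
  have hne : ∀ x : V, ({r : ℝ | ∃ u ∈ F, ∃ v ∈ F, x = u - v ∧ r = n u + n v}).Nonempty := by
    intro x
    obtain ⟨u, hu, v, hv, hx⟩ := hgen x
    exact ⟨n u + n v, u, hu, v, hv, hx, rfl⟩
  have hbdd : ∀ x : V, BddBelow {r : ℝ | ∃ u ∈ F, ∃ v ∈ F, x = u - v ∧ r = n u + n v} :=
    fun x => ⟨n x, hlb x⟩
  have hs : s ∈ F := hball s (by simpa [hn0] using hδ)
  refine ⟨fun x => le_csInf (hne x) (hlb x), fun x => ?_⟩
  -- upper bound: for every ε > 0, extNorm x ≤ (2 n s/δ + 1) n x + ε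
  refine le_of_forall_pos_le_add fun ε hε => ?_
  set ε' : ℝ := ε * δ / (2 * n s + 1) with hε'def
  have hns : 0 ≤ n s := hn_nonneg s
  have hε' : 0 < ε' := by positivity
  set t : ℝ := n x + ε' with htdef
  have ht : 0 < t := by have := hn_nonneg x; linarith
  have hxlt : n x < t := by linarith
  -- v = s - (δ/t) • x ∈ F
  have hvF : s - (δ / t) • x ∈ F := by
    apply hball
    have : s - (s - (δ / t) • x) = (δ / t) • x := by abel
    rw [this, hn_hom]
    rw [abs_of_pos (by positivity)]
    calc δ / t * n x < δ / t * t := by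
          exact mul_lt_mul_of_pos_left hxlt (by positivity)
      _ = δ := by field_simp
  -- x = (t/δ) • s - (t/δ) • (s - (δ/t) • x)
  have hxeq : x = (t / δ) • s - (t / δ) • (s - (δ / t) • x) := by
    rw [smul_sub, smul_smul]
    have : t / δ * (δ / t) = 1 := by field_simp
    rw [this, one_smul]; abel
  have huF : (t / δ) • s ∈ F := hF_smul _ (by positivity) _ hs
  have hvF' : (t / δ) • (s - (δ / t) • x) ∈ F := hF_smul _ (by positivity) _ hvF
  have hmem : n ((t / δ) • s) + n ((t / δ) • (s - (δ / t) • x)) ∈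
      {r : ℝ | ∃ u ∈ F, ∃ v ∈ F, x = u - v ∧ r = n u + n v} :=
    ⟨_, huF, _, hvF', hxeq, rfl⟩
  have h1 := csInf_le (hbdd x) hmem
  -- bound the member
  have hnv : n (s - (δ / t) • x) ≤ n s + (δ / t) * n x := by
    calc n (s - (δ / t) • x) = n (s + (-(δ / t)) • x) := by
          rw [neg_smul, ← sub_eq_add_neg]
      _ ≤ n s + n ((-(δ / t)) • x) := hn_tri _ _
      _ = n s + (δ / t) * n x := by
          rw [hn_hom, abs_neg, abs_of_pos (by positivity)]
  have h2 : n ((t / δ) • s) + n ((t / δ) • (s - (δ / t) • x)) ≤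
      2 * t * n s / δ + n x := by
    rw [hn_hom, hn_hom, abs_of_pos (by positivity : (0:ℝ) < t / δ)]
    have := mul_le_mul_of_nonneg_left hnv (le_of_lt (by positivity : (0:ℝ) < t / δ))
    have ht' : t ≠ 0 := ne_of_gt ht
    have hδ' : δ ≠ 0 := ne_of_gt hδ
    calc t / δ * n s + t / δ * n (s - (δ / t) • x)
        ≤ t / δ * n s + t / δ * (n s + (δ / t) * n x) := by linarith
      _ = 2 * t * n s / δ + n x := by field_simp; ring
  have h3 : 2 * t * n s / δ + n x ≤ (2 * n s / δ + 1) * n x + ε := by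
    have key : 2 * ε' * n s / δ ≤ ε := by
      rw [hε'def]
      rw [div_le_iff₀ hδ] at *
      have h4 : 2 * (ε * δ / (2 * n s + 1)) * n s = ε * δ * (2 * n s / (2 * n s + 1)) := by
        ring
      rw [h4]
      have h5 : 2 * n s / (2 * n s + 1) ≤ 1 := by
        rw [div_le_one (by linarith)]; linarith
      calc ε * δ * (2 * n s / (2 * n s + 1)) ≤ ε * δ * 1 :=
            mul_le_mul_of_nonneg_left h5 (by positivity)
        _ = ε * δ := by ring
    have : 2 * t * n s / δ = 2 * n x * n s / δ + 2 * ε' * n s / δ := by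
      rw [htdef]; ring
    rw [this]
    have : (2 * n s / δ + 1) * n x = 2 * n x * n s / δ + n x := by ring
    rw [this]
    linarith
  exact (h1.trans h2).trans h3
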